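/- Let F be a field of prime characteristic p, and let φ ∈ F(z) be a nonconstant rational function satisfying φ(z + 1) = φ(z) + 1. Then there exists a rational function ψ ∈ F(z) such that φ(z) − z = ψ(z^p − z), and consequently deg(φ) equals p·deg(ψ) or p·deg(ψ) + 1. -/

import Mathlib

open Polynomial

lemma comp_X_add_one_eq_zero_iff {F : Type*} [Field F] (t : Polynomial F) :
    t.comp (X + 1) = 0 ↔ t = 0 := by
  constructor
  · intro hc
    have : (t.comp (X + 1)).comp (X - 1) = t := by
      rw [comp_assoc]
      simp [add_comp, sub_comp]
    rw [hc, zero_comp] at this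
    exact this.symm
  · intro h; simp [h]

lemma degree_comp_X_add_one {F : Type*} [Field F] (t : Polynomial F) :
    (t.comp (X + 1)).degree = t.degree := by
  rcases eq_or_ne t 0 with h0 | h0
  · simp [h0]
  · have h1 : t.comp (X + 1) ≠ 0 := fun hc => h0 ((comp_X_add_one_eq_zero_iff t).mp hc)
    rw [degree_eq_natDegree h1, degree_eq_natDegree h0, natDegree_comp]
    have : (X + 1 : Polynomial F).natDegree = 1 := by simpa using natDegree_X_add_C (1 : F)
    rw [this, mul_one]

-- A polynomial of natDegree < p invariant under z ↦ z+1 is constant.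
lemma const_of_invariant {F : Type*} [Field F] (p : ℕ) (hp : p.Prime) [CharP F p]
    (t : Polynomial F) (hd : t.natDegree < p) (hinv : t.comp (X + 1) = t) :
    t = C (t.eval 0) := by
  classical
  by_contra hne
  set w : Polynomial F := t - C (t.eval 0) with hw
  have hw0 : w ≠ 0 := sub_ne_zero.mpr hne
  have hstep : ∀ x : F, t.eval (x + 1) = t.eval x := by
    intro x
    have := congrArg (Polynomial.eval x) hinv
    simpa [eval_comp] using this
  have heval : ∀ n : ℕ, t.eval (n : F) = t.eval 0 := by
    intro n
    induction n with
    | zero => simp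
    | succ n ih => rw [Nat.cast_succ, hstep, ih]
  have hroots : ((Finset.range p).image (Nat.cast : ℕ → F)) ⊆ w.roots.toFinset := by
    intro x hx
    simp only [Finset.mem_image, Finset.mem_range] at hx
    obtain ⟨n, hn, rfl⟩ := hx
    simp only [Multiset.mem_toFinset, mem_roots hw0, IsRoot.def]
    simp [hw, heval n]
  have hcard : ((Finset.range p).image (Nat.cast : ℕ → F)).card = p := by
    rw [Finset.card_image_of_injOn, Finset.card_range]
    intro a ha b hb hab
    exact CharP.natCast_injOn_Iio F p (by simpa using ha) (by simpa using hb) hab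
  have h1 : p ≤ w.roots.toFinset.card := hcard ▸ Finset.card_le_card hroots
  have h2 : w.roots.toFinset.card ≤ w.natDegree :=
    le_trans (Multiset.toFinset_card_le _) (w.card_roots')
  have h3 : w.natDegree ≤ t.natDegree := by
    have := natDegree_sub_le t (C (t.eval 0))
    simpa [hw] using this
  omega

-- key lemma: invariant polynomial is a polynomial in X^p − X
lemma invariant_comp {F : Type*} [Field F] (p : ℕ) (hp : p.Prime) [CharP F p] :
    ∀ (n : ℕ) (h : Polynomial F), h.natDegree ≤ n → h.comp (X + 1) = h →
      ∃ r : Polynomial F, h = r.comp (X ^ p - X) := by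
  haveI : Fact p.Prime := ⟨hp⟩
  have hp1 : 1 < p := hp.one_lt
  have hρdeg : (X ^ p - X : Polynomial F).natDegree = p := by
    rw [natDegree_sub_eq_left_of_natDegree_lt] <;>
      simp [natDegree_X_pow, hp1]
  have hρmonic : (X ^ p - X : Polynomial F).Monic := by
    refine monic_X_pow_sub ?_
    refine degree_X_le.trans_lt ?_
    exact_mod_cast hp1
  have hρinv : (X ^ p - X : Polynomial F).comp (X + 1) = X ^ p - X := by
    simp only [sub_comp, pow_comp, X_comp]
    rw [add_pow_char]
    ring
  intro n
  induction n using Nat.strong_induction_on with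
  | _ n ih =>
    intro h hdeg hinv
    by_cases hsmall : h.natDegree < p
    · exact ⟨C (h.eval 0), by
        rw [const_of_invariant p hp h hsmall hinv]; simp⟩
    · push_neg at hsmall
      set ρ : Polynomial F := X ^ p - X with hρ
      have hdiv := (modByMonic_add_div h ρ).symm
      set s := h /ₘ ρ with hs
      set t := h %ₘ ρ with ht
      have htdeg : t.degree < ρ.degree := degree_modByMonic_lt h hρmonic
      have htdeg' : (t.comp (X + 1)).degree < ρ.degree := by
        rw [degree_comp_X_add_one]; exact htdeg
      have hinv2 : (t.comp (X + 1)) + ρ * (s.comp (X + 1)) = h := by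
        calc (t.comp (X + 1)) + ρ * (s.comp (X + 1))
            = (t.comp (X + 1)) + (ρ.comp (X+1)) * (s.comp (X + 1)) := by rw [hρinv]
          _ = (t + ρ * s).comp (X + 1) := by simp [add_comp, mul_comp]
          _ = h.comp (X + 1) := by rw [← hdiv]
          _ = h := hinv
      obtain ⟨hseq, hteq⟩ :=
        div_modByMonic_unique (s.comp (X+1)) (t.comp (X+1)) hρmonic ⟨hinv2, htdeg'⟩
      have hsinv : s.comp (X + 1) = s := hseq.symm
      have htinv : t.comp (X + 1) = t := hteq.symm
      have htdegnat : t.natDegree < p := by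
        rcases eq_or_ne t 0 with h0 | h0
        · simpa [h0] using hp.pos
        · have := natDegree_lt_natDegree h0 htdeg
          rwa [hρdeg] at this
      have hs0 : s ≠ 0 := by
        intro h0
        rw [h0, mul_zero, add_zero] at hdiv
        have : h.natDegree < p := hdiv ▸ htdegnat
        omega
      have hsdeg : s.natDegree < h.natDegree := by
        have := natDegree_divByMonic h hρmonic
        rw [← hs, hρdeg] at this
        omega
      obtain ⟨r₀, hr₀⟩ := ih s.natDegree (by omega) s le_rfl hsinv
      have htconst : t = C (t.eval 0) := const_of_invariant p hp t htdegnat htinv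
      refine ⟨X * r₀ + C (t.eval 0), ?_⟩
      rw [hdiv, htconst, hr₀]
      simp only [add_comp, mul_comp, X_comp, C_comp, eval_C]
      ring

lemma natDegree_comp_X_add_one {F : Type*} [Field F] (t : Polynomial F) :
    (t.comp (X + 1)).natDegree = t.natDegree := by
  rw [natDegree_comp]
  have : (X + 1 : Polynomial F).natDegree = 1 := by simpa using natDegree_X_add_C (1 : F)
  rw [this, mul_one]

lemma leadingCoeff_comp_X_add_one {F : Type*} [Field F] (t : Polynomial F) :
    (t.comp (X + 1)).leadingCoeff = t.leadingCoeff := by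
  have h1 : (X + 1 : Polynomial F).natDegree ≠ 0 := by
    simp [show (X + 1 : Polynomial F).natDegree = 1 by simpa using natDegree_X_add_C (1 : F)]
  rw [leadingCoeff_comp h1]
  have : (X + 1 : Polynomial F).leadingCoeff = 1 := by
    simpa using (monic_X_add_C (1 : F)).leadingCoeff
  rw [this, one_pow, mul_one]

theorem invariant_under_translation_char_p
    {F : Type*} [Field F] (p : ℕ) (hp : p.Prime) [CharP F p]
    (f g : Polynomial F) (hg : g ≠ 0) (hcop : IsCoprime f g)
    (hnc : 1 ≤ max f.natDegree g.natDegree)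
    (hcomm : f.comp (X + 1) * g = (f + g) * g.comp (X + 1)) :
    ∃ u q : Polynomial F, q ≠ 0 ∧ IsCoprime u q ∧
      (f - X * g) * q.comp (X ^ p - X) = g * u.comp (X ^ p - X) ∧
      (max f.natDegree g.natDegree = p * max u.natDegree q.natDegree ∨
       max f.natDegree g.natDegree = p * max u.natDegree q.natDegree + 1) := by
  classical
  have hρdeg : (X ^ p - X : Polynomial F).natDegree = p := by
    rw [natDegree_sub_eq_left_of_natDegree_lt] <;>
      simp [natDegree_X_pow, hp.one_lt]
  have hgc : g.comp (X + 1) ≠ 0 := fun hc => hg ((comp_X_add_one_eq_zero_iff g).mp hc)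
  have hf0 : f ≠ 0 := by
    rintro rfl
    rw [zero_comp, zero_mul, zero_add] at hcomm
    exact (mul_ne_zero hg hgc) hcomm.symm
  have hfc : f.comp (X + 1) ≠ 0 := fun hc => hf0 ((comp_X_add_one_eq_zero_iff f).mp hc)
  have hfg0 : f + g ≠ 0 := by
    intro h0
    rw [h0, zero_mul] at hcomm
    rcases mul_eq_zero.mp hcomm with h | h
    · exact hfc h
    · exact hg h
  -- degree of f + g equals degree of f, leading coeff too
  have hdeq : (f + g).natDegree = f.natDegree := by
    have := congrArg natDegree hcomm
    rw [natDegree_mul hfc hg, natDegree_mul hfg0 hgc,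
      natDegree_comp_X_add_one, natDegree_comp_X_add_one] at this
    omega
  have hlc : (f + g).leadingCoeff = f.leadingCoeff := by
    have := congrArg leadingCoeff hcomm
    rw [leadingCoeff_mul, leadingCoeff_mul, leadingCoeff_comp_X_add_one,
      leadingCoeff_comp_X_add_one] at this
    exact mul_right_cancel₀ (leadingCoeff_ne_zero.mpr hg) this.symm
  -- g has smaller degree than f
  have hng : g.natDegree < f.natDegree := by
    by_contra hcon
    push_neg at hcon
    rcases lt_or_eq_of_le hcon with hlt | heq
    · have := natDegree_add_eq_right_of_natDegree_lt (p := f) (q := g) hlt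
      omega
    · have h1 : (f + g).coeff f.natDegree = f.leadingCoeff := by
        rw [← hlc, leadingCoeff, hdeq]
      rw [coeff_add, ← leadingCoeff] at h1
      have h2 : g.coeff f.natDegree = 0 := by
        have := add_eq_left.mp h1
        exact this
      rw [heq, ← leadingCoeff] at h2
      exact (leadingCoeff_ne_zero.mpr hg) h2
  -- the numerator of φ(z) - z
  have h1 : (f - X * g).comp (X + 1) * g = (f - X * g) * g.comp (X + 1) := by
    simp only [sub_comp, mul_comp, X_comp]
    linear_combination hcomm
  have hcopN : IsCoprime (f - X * g) g := by
    have h := hcop.add_mul_left_left (-X)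
    have he : f - X * g = f + g * (-X) := by ring
    rwa [← he] at h
  have hcopN' : IsCoprime ((f - X * g).comp (X + 1)) (g.comp (X + 1)) := by
    obtain ⟨a₀, b₀, hab⟩ := hcopN
    exact ⟨a₀.comp (X + 1), b₀.comp (X + 1), by
      have := congrArg (fun q : Polynomial F => q.comp (X + 1)) hab
      simpa [add_comp, mul_comp] using this⟩
  have hdvd : g.comp (X + 1) ∣ g := by
    refine (hcopN'.symm).dvd_of_dvd_mul_left ⟨f - X * g, by linear_combination h1⟩
  have geq : g.comp (X + 1) = g := by
    obtain ⟨k, hk⟩ := hdvd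
    have hk0 : k ≠ 0 := by
      rintro rfl; rw [mul_zero] at hk; exact hg hk
    have hnk : k.natDegree = 0 := by
      have := congrArg natDegree hk
      rw [natDegree_mul hgc hk0, natDegree_comp_X_add_one] at this
      omega
    obtain ⟨c, hc⟩ := natDegree_eq_zero.mp hnk
    have hlck := congrArg leadingCoeff hk
    rw [leadingCoeff_mul, leadingCoeff_comp_X_add_one, ← hc, leadingCoeff_C] at hlck
    have hc1 : c = 1 := by
      have h2 : g.leadingCoeff * 1 = g.leadingCoeff * c := by rw [mul_one]; exact hlck
      exact (mul_left_cancel₀ (leadingCoeff_ne_zero.mpr hg) h2).symm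
    conv_rhs => rw [hk]
    rw [← hc, hc1, map_one, mul_one]
  have Ninv : (f - X * g).comp (X + 1) = f - X * g := by
    rw [geq] at h1
    exact mul_right_cancel₀ hg h1
  obtain ⟨a, ha⟩ := invariant_comp p hp (f - X * g).natDegree (f - X * g) le_rfl Ninv
  obtain ⟨b, hb⟩ := invariant_comp p hp g.natDegree g le_rfl geq
  have hb0 : b ≠ 0 := by
    rintro rfl; rw [zero_comp] at hb; exact hg hb
  -- coprimality of a and b
  have hcopab : IsCoprime a b := by
    rw [← EuclideanDomain.gcd_isUnit_iff]
    set d := EuclideanDomain.gcd a b with hd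
    have hda : d ∣ a := EuclideanDomain.gcd_dvd_left a b
    have hdb : d ∣ b := EuclideanDomain.gcd_dvd_right a b
    have h2 : d.comp (X ^ p - X) ∣ (f - X * g) := by
      obtain ⟨e, he⟩ := hda
      exact ⟨e.comp (X ^ p - X), by rw [ha, he, mul_comp]⟩
    have h3 : d.comp (X ^ p - X) ∣ g := by
      obtain ⟨e, he⟩ := hdb
      exact ⟨e.comp (X ^ p - X), by rw [hb, he, mul_comp]⟩
    have hu : IsUnit (d.comp (X ^ p - X)) := hcopN.isUnit_of_dvd' h2 h3
    have hnd : d.natDegree = 0 := by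
      have h4 := natDegree_eq_zero_of_isUnit hu
      rw [natDegree_comp, hρdeg] at h4
      have := hp.pos
      exact Nat.mul_eq_zero.mp h4 |>.elim id (fun h => absurd h (by omega))
    have hd0 : d ≠ 0 := by
      intro h0
      exact hb0 (EuclideanDomain.gcd_eq_zero_iff.mp (hd ▸ h0)).2
    obtain ⟨c, hc⟩ := natDegree_eq_zero.mp hnd
    rw [← hc]
    exact isUnit_C.mpr (isUnit_iff_ne_zero.mpr (fun h0 => hd0 (by rw [← hc, h0, map_zero])))
  refine ⟨a, b, hb0, hcopab, by rw [ha, hb]; ring, ?_⟩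
  -- degree bookkeeping
  have e1 : (f - X * g).natDegree = a.natDegree * p := by
    rw [ha, natDegree_comp, hρdeg]
  have e2 : g.natDegree = b.natDegree * p := by
    rw [hb, natDegree_comp, hρdeg]
  have hxg : (X * g).natDegree = 1 + g.natDegree := by
    rw [natDegree_mul X_ne_zero hg, natDegree_X]
  have hfe : f = (f - X * g) + X * g := by ring
  have hnf_le := natDegree_add_le (f - X * g) (X * g)
  rw [← hfe, hxg] at hnf_le
  have hnN_le := natDegree_sub_le f (X * g)
  rw [hxg] at hnN_le
  have hmm : p * max a.natDegree b.natDegree = max (a.natDegree * p) (b.natDegree * p) := by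
    rcases le_total a.natDegree b.natDegree with h | h
    · rw [max_eq_right h, max_eq_right (Nat.mul_le_mul_right p h), mul_comm]
    · rw [max_eq_left h, max_eq_left (Nat.mul_le_mul_right p h), mul_comm]
  rw [hmm]
  omega
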